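/- Let A be a finite dimensional algebra with no loop in its quiver. If every sincere A-module is faithful, then A is hereditary. -/

import Mathlib

open CategoryTheory Limits

noncomputable section

variable {A : Type} [Ring A]

/-- Vanishing of `Ext^n`. -/
def extZero (M N : ModuleCat.{0} A) (n : ℕ) : Prop :=
  Subsingleton (((Ext ℤ (ModuleCat.{0} A) n).obj (Opposite.op M)).obj N)

/-- `pd M ≤ n`, via vanishing of higher Ext. -/
def pdLE (M : ModuleCat.{0} A) (n : ℕ) : Prop :=
  ∀ (N : ModuleCat.{0} A) (m : ℕ), n < m → extZero M N m

/-- Projective dimension in `ℕ∞`. -/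
def projDim (M : ModuleCat.{0} A) : ℕ∞ :=
  sInf {d : ℕ∞ | ∃ n : ℕ, d = n ∧ pdLE M n}

/-- `N` is a direct summand of `M`. -/
def IsSummand (N M : ModuleCat.{0} A) : Prop :=
  ∃ L : ModuleCat.{0} A, Nonempty (M ≅ N ⊞ L)

/-- Indecomposable module. -/
def Indec (M : ModuleCat.{0} A) : Prop :=
  ¬ IsZero M ∧ ∀ N L : ModuleCat.{0} A, Nonempty (M ≅ N ⊞ L) → IsZero N ∨ IsZero L

/-- Setoid of indecomposable summands up to isomorphism. -/
def summandSetoid (M : ModuleCat.{0} A) :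
    Setoid {N : ModuleCat.{0} A // Indec N ∧ IsSummand N M} where
  r X Y := Nonempty (X.1 ≅ Y.1)
  iseqv := ⟨fun X => ⟨Iso.refl _⟩, fun ⟨e⟩ => ⟨e.symm⟩, fun ⟨e⟩ ⟨f⟩ => ⟨e.trans f⟩⟩

/-- `|M|`: number of pairwise non-isomorphic indecomposable direct summands. -/
def numIndec (M : ModuleCat.{0} A) : ℕ :=
  Nat.card (Quotient (summandSetoid M))

/-- `X` belongs to `Fac M`. -/
def InFac (M X : ModuleCat.{0} A) : Prop :=
  ∃ (n : ℕ) (f : (⨁ fun _ : Fin n => M) ⟶ X), Epi f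

/-- `X` belongs to `add M`. -/
def InAdd (M X : ModuleCat.{0} A) : Prop :=
  ∃ n : ℕ, IsSummand X (⨁ fun _ : Fin n => M)

/-- τ-rigidity, via the Auslander–Smalø criterion `Hom(M, τM) = 0 ↔ Ext¹(M, Fac M) = 0`. -/
def TauRigid (M : ModuleCat.{0} A) : Prop :=
  ∀ X : ModuleCat.{0} A, InFac M X → extZero M X 1

/-- τ-tilting module. -/
def TauTilting (M : ModuleCat.{0} A) : Prop :=
  TauRigid M ∧ numIndec M = numIndec (ModuleCat.of A A)

/-- Tilting module. -/
def IsTilting (M : ModuleCat.{0} A) : Prop :=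
  pdLE M 1 ∧ extZero M M 1 ∧ numIndec M = numIndec (ModuleCat.of A A)

/-- The quiver of `A` has no loop: `Ext¹(S,S) = 0` for every simple `S`. -/
def NoLoops (A : Type) [Ring A] : Prop :=
  ∀ S : ModuleCat.{0} A, Simple S → extZero S S 1

/-- Sincere module. -/
def Sincere (M : ModuleCat.{0} A) : Prop :=
  ∀ P : ModuleCat.{0} A, Projective P → ¬ IsZero P → ∃ f : P ⟶ M, f ≠ 0

/-- Faithful module: zero annihilator. -/
def FaithfulMod (M : ModuleCat.{0} A) : Prop :=
  ∀ a : A, (∀ m : M, a • m = 0) → a = 0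

/-- Hereditary: every module has projective dimension at most 1. -/
def Hereditary (A : Type) [Ring A] : Prop :=
  ∀ M : ModuleCat.{0} A, pdLE M 1


section Aux

lemma subsingleton_of_isZero' {R : Type*} [Ring R] {W : ModuleCat R} (h : IsZero W) :
    Subsingleton W := by
  have hid : 𝟙 W = (0 : W ⟶ W) := h.eq_of_src _ _
  have hz : ∀ w : W, w = 0 := fun w =>
    calc w = (𝟙 W) w := rfl
    _ = (0 : W ⟶ W) w := by rw [hid]
    _ = 0 := rfl
  exact ⟨fun x y => by rw [hz x, hz y]⟩

/-- powers of the Jacobson radical, as an iterated smul -/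
def jpow (A : Type) [Ring A] : ℕ → Ideal A
  | 0 => ⊤
  | n + 1 => Ideal.jacobson (⊥ : Ideal A) • jpow A n

lemma jpow_succ (n : ℕ) : jpow A (n + 1) = Ideal.jacobson (⊥ : Ideal A) • jpow A n := rfl

lemma jpow_succ_le (n : ℕ) : jpow A (n + 1) ≤ jpow A n := by
  induction n with
  | zero => exact le_top
  | succ n ih => exact Submodule.smul_mono le_rfl ih

lemma mem_ideal_smul_span_finset {J : Ideal A} (hmul : ∀ {x y : A}, x ∈ J → x * y ∈ J)
    {s : Finset A} {x : A} (hx : x ∈ J • Ideal.span (s : Set A)) :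
    ∃ c : A → A, (∀ i, c i ∈ J) ∧ ∑ i ∈ s, c i * i = x := by
  refine Submodule.smul_induction_on hx ?_ ?_
  · intro r hr n hn
    obtain ⟨c, -, hc⟩ := Submodule.mem_span_finset.mp hn
    refine ⟨fun i => r * c i, fun i => hmul hr, ?_⟩
    rw [← hc, smul_eq_mul, Finset.mul_sum]
    exact Finset.sum_congr rfl fun i _ => by rw [smul_eq_mul, mul_assoc]
  · rintro x y ⟨c, hc, rfl⟩ ⟨d, hd, rfl⟩
    exact ⟨fun i => c i + d i, fun i => J.add_mem (hc i) (hd i), by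
      rw [← Finset.sum_add_distrib]; exact Finset.sum_congr rfl fun i _ => (add_mul _ _ _)⟩

lemma nakayama_span
    (hmul : ∀ {x y : A}, x ∈ Ideal.jacobson (⊥ : Ideal A) → x * y ∈ Ideal.jacobson (⊥ : Ideal A))
    (s : Finset A)
    (hle : Ideal.span (s : Set A) ≤ Ideal.jacobson (⊥ : Ideal A) • Ideal.span (s : Set A)) :
    Ideal.span (s : Set A) = ⊥ := by
  classical
  induction s using Finset.strongInduction with
  | _ s ih =>
    rcases s.eq_empty_or_nonempty with rfl | ⟨x, hx⟩
    · simp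
    · have hxmem : x ∈ Ideal.jacobson (⊥ : Ideal A) • Ideal.span (s : Set A) :=
        hle (Submodule.subset_span hx)
      obtain ⟨c, hc, hsum⟩ := mem_ideal_smul_span_finset hmul hxmem
      obtain ⟨z, hz⟩ := Ideal.mem_jacobson_iff.mp (hc x) (-1)
      rw [Submodule.mem_bot] at hz
      have hz1 : z * (1 - c x) = 1 := by
        have h1 : z * (1 - c x) = z * (-1) * c x + z := by noncomm_ring
        rw [h1, ← sub_eq_zero]
        simpa using hz
      have h2 : x = c x * x + ∑ i ∈ s.erase x, c i * i := by
        rw [Finset.add_sum_erase s (fun i => c i * i) hx, hsum]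
      have h3 : x - c x * x = ∑ i ∈ s.erase x, c i * i := sub_eq_of_eq_add' h2
      have hrest : (1 - c x) * x = ∑ i ∈ s.erase x, c i * i := by
        rw [sub_mul, one_mul]; exact h3
      have hx' : x ∈ Ideal.span ((s.erase x : Finset A) : Set A) := by
        have hxe : x = z * ((1 - c x) * x) := by rw [← mul_assoc, hz1, one_mul]
        have hmem : z * ((1 - c x) * x) ∈ Ideal.span ((s.erase x : Finset A) : Set A) := by
          rw [hrest]
          exact Ideal.mul_mem_left _ z (Submodule.sum_mem _ fun i hi =>
            Ideal.mul_mem_left _ _ (Submodule.subset_span hi))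
        rwa [← hxe] at hmem
      have hspan : Ideal.span (s : Set A) = Ideal.span ((s.erase x : Finset A) : Set A) := by
        refine le_antisymm (Submodule.span_le.mpr fun y hy => ?_)
          (Submodule.span_mono (by exact_mod_cast Finset.erase_subset x s))
        rcases eq_or_ne y x with rfl | hne
        · exact hx'
        · exact Submodule.subset_span (Finset.mem_erase.mpr ⟨hne, hy⟩)
      have hle' : Ideal.span ((s.erase x : Finset A) : Set A) ≤
          Ideal.jacobson (⊥ : Ideal A) • Ideal.span ((s.erase x : Finset A) : Set A) := by
        rw [← hspan]; exact hle
      rw [hspan]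
      exact ih (s.erase x) (Finset.erase_ssubset hx) hle'

lemma exists_jpow_eq_bot [IsArtinian A A] [IsNoetherian A A]
    (hmul : ∀ {x y : A}, x ∈ Ideal.jacobson (⊥ : Ideal A) → x * y ∈ Ideal.jacobson (⊥ : Ideal A)) :
    ∃ n, jpow A n = ⊥ := by
  have hmono : Monotone (fun n => OrderDual.toDual (jpow A n)) :=
    antitone_nat_of_succ_le jpow_succ_le
  obtain ⟨n, hn⟩ := IsArtinian.monotone_stabilizes ⟨fun n => OrderDual.toDual (jpow A n), hmono⟩
  have heq : jpow A n = jpow A (n + 1) := congrArg OrderDual.ofDual (hn (n + 1) (Nat.le_succ n))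
  obtain ⟨s, hs⟩ := IsNoetherian.noetherian (jpow A n)
  have hs' : Ideal.span (↑s : Set A) = jpow A n := hs
  refine ⟨n, ?_⟩
  rw [← hs']
  refine nakayama_span hmul s ?_
  rw [hs']
  exact le_of_eq (heq.trans (jpow_succ n))

lemma smul_smul_le (I K : Ideal A) {M : Type} [AddCommGroup M] [Module A M]
    (N : Submodule A M) : I • (K • N) ≤ (I • K) • N := by
  refine Submodule.smul_le.mpr fun r hr n hn => ?_
  refine Submodule.smul_induction_on hn ?_ ?_
  · intro c hc t ht
    rw [← smul_assoc, smul_eq_mul]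
    exact Submodule.smul_mem_smul (Submodule.smul_mem_smul hr hc) ht
  · intro a b ha hb
    rw [smul_add]
    exact Submodule.add_mem _ ha hb

lemma isSemisimpleRing_of_jacobson_bot' [IsArtinian A A]
    (hbot : Ideal.jacobson (⊥ : Ideal A) = ⊥) : IsSemisimpleRing A := by
  classical
  obtain ⟨N, hNS, hmin⟩ := IsArtinian.set_has_minimal
    {I : Ideal A | ∃ s : Finset (Ideal A), (∀ m ∈ s, m.IsMaximal) ∧ I = s.inf id}
    ⟨⊤, ∅, by simp, by simp⟩
  obtain ⟨s, hsmax, rfl⟩ := hNS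
  have hNle : ∀ m : Ideal A, m.IsMaximal → s.inf id ≤ m := by
    intro m hm
    have hmem : s.inf id ⊓ m ∈
        {I : Ideal A | ∃ s : Finset (Ideal A), (∀ m ∈ s, m.IsMaximal) ∧ I = s.inf id} := by
      refine ⟨insert m s, ?_, ?_⟩
      · intro x hxm
        rcases Finset.mem_insert.mp hxm with rfl | hxs
        · exact hm
        · exact hsmax x hxs
      · rw [Finset.inf_insert]
        simp [inf_comm]
    have hnlt := hmin _ hmem
    have hle' : s.inf id ⊓ m ≤ s.inf id := inf_le_left
    have heq : s.inf id ⊓ m = s.inf id :=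
      (lt_or_eq_of_le hle').resolve_left hnlt
    exact inf_eq_left.mp heq
  have hNbot : s.inf id = ⊥ := by
    rw [eq_bot_iff, ← hbot]
    exact le_sInf fun J hJ => hNle J hJ.2
  let f : A →ₗ[A] (∀ i : s, A ⧸ (i : Ideal A)) := LinearMap.pi fun i => (i : Ideal A).mkQ
  have hker : LinearMap.ker f = ⊥ := by
    rw [LinearMap.ker_pi]
    simp_rw [Submodule.ker_mkQ]
    rw [eq_bot_iff, ← hNbot, Finset.inf_eq_iInf]
    exact le_iInf₂ fun i hi => iInf_le (fun j : s => (j : Ideal A)) ⟨i, hi⟩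
  haveI hsimple : ∀ i : s, IsSimpleModule A (A ⧸ (i : Ideal A)) := fun i =>
    isSimpleModule_iff_isCoatom.mpr (hsmax i i.2).out
  haveI : IsSemisimpleModule A (∀ i : s, A ⧸ (i : Ideal A)) := by
    refine isSemisimpleModule_of_isSemisimpleModule_submodule'
      (p := fun i => LinearMap.range (LinearMap.single A (fun i : s => A ⧸ (i : Ideal A)) i)) ?_ ?_
    · intro i
      haveI := hsimple i
      exact IsSemisimpleModule.range _
    · simp_rw [LinearMap.range_eq_map, Submodule.iSup_map_single, Submodule.pi_top]
  have hinj : Function.Injective f := LinearMap.ker_eq_bot.mp hker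
  exact IsSemisimpleModule.congr (M := ↥(LinearMap.range f)) (LinearEquiv.ofInjective f hinj)

lemma moduleProjective_of_semisimple [IsSemisimpleRing A] (M : Type) [AddCommGroup M]
    [Module A M] : Module.Projective A M := by
  let π : (M →₀ A) →ₗ[A] M := Finsupp.linearCombination A id
  have hsurj : Function.Surjective π := Finsupp.linearCombination_id_surjective A M
  obtain ⟨q, hq⟩ := exists_isCompl (LinearMap.ker π)
  have hbij : Function.Bijective (π.comp q.subtype) := by
    constructor
    · intro a b hab
      have hker' : (a : M →₀ A) - b ∈ LinearMap.ker π ⊓ q :=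
        ⟨LinearMap.mem_ker.mpr (by rw [map_sub, sub_eq_zero]; exact hab),
          Submodule.sub_mem q a.2 b.2⟩
      rw [hq.inf_eq_bot, Submodule.mem_bot] at hker'
      exact Subtype.ext (sub_eq_zero.mp hker')
    · intro m
      obtain ⟨y, hy⟩ := hsurj m
      obtain ⟨a, b, ha, hb, hab⟩ := Submodule.codisjoint_iff_exists_add_eq.mp hq.codisjoint y
      refine ⟨⟨b, hb⟩, ?_⟩
      have h1 : π y = π b := by
        rw [← hab, map_add, LinearMap.mem_ker.mp ha, zero_add]
      show π b = m
      rw [← h1, hy]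
  let e : q ≃ₗ[A] M := LinearEquiv.ofBijective (π.comp q.subtype) hbij
  refine Module.Projective.of_split (M := M →₀ A) (q.subtype ∘ₗ (e.symm : M →ₗ[A] q)) π ?_
  ext m
  exact e.apply_symm_apply m

end Aux

theorem stmt_12 {k A : Type} [Field k] [IsAlgClosed k] [Ring A] [Algebra k A]
    [FiniteDimensional k A] (hloop : NoLoops A)
    (h : ∀ M : ModuleCat.{0} A, Module.Finite A M → Sincere M → FaithfulMod M) :
    Hereditary A := by
  haveI hart : IsArtinian A A := isArtinian_of_tower k inferInstance
  haveI hnoe : IsNoetherian A A := isNoetherian_of_tower k inferInstance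
  have hmul : ∀ {x y : A}, x ∈ Ideal.jacobson (⊥ : Ideal A) →
      x * y ∈ Ideal.jacobson (⊥ : Ideal A) :=
    fun {x y} hx => Ideal.mul_mem_right y _ hx
  obtain ⟨n, hn⟩ := exists_jpow_eq_bot (A := A) hmul
  set Mq : ModuleCat.{0} A := ModuleCat.of A (A ⧸ Ideal.jacobson (⊥ : Ideal A)) with hMq
  have hfin : Module.Finite A Mq :=
    Module.Finite.of_surjective (Ideal.jacobson (⊥ : Ideal A)).mkQ
      (Submodule.mkQ_surjective _)
  have hsin : Sincere Mq := by
    intro P hP hPne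
    have hproj : Module.Projective A P := (IsProjective.iff_projective P).mpr hP
    obtain ⟨s, hs⟩ := Module.projective_def'.mp hproj
    by_cases hall : ∀ (p : P) (i : P), s p i ∈ Ideal.jacobson (⊥ : Ideal A)
    · exfalso
      have hJtop : (⊤ : Submodule A P) ≤ Ideal.jacobson (⊥ : Ideal A) • ⊤ := by
        intro p _
        have hp : Finsupp.linearCombination A id (s p) = p := LinearMap.congr_fun hs p
        rw [← hp, Finsupp.linearCombination_apply]
        exact Submodule.finsuppSum_mem A _ (s p) (fun i a => a • id i)
          (fun i _ => Submodule.smul_mem_smul (hall p i) Submodule.mem_top)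
      have hchain : ∀ m, (⊤ : Submodule A P) ≤ jpow A m • ⊤ := by
        intro m
        induction m with
        | zero => rw [show jpow A 0 = ⊤ from rfl, Submodule.top_smul]
        | succ m ih =>
          calc (⊤ : Submodule A P) ≤ Ideal.jacobson (⊥ : Ideal A) • ⊤ := hJtop
            _ ≤ Ideal.jacobson (⊥ : Ideal A) • (jpow A m • ⊤) := Submodule.smul_mono le_rfl ih
            _ ≤ (Ideal.jacobson (⊥ : Ideal A) • jpow A m) • ⊤ := smul_smul_le _ _ _
            _ = jpow A (m + 1) • ⊤ := by rw [jpow_succ]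
      have hbot : (⊤ : Submodule A P) ≤ ⊥ := by
        have := hchain n
        rwa [hn, Submodule.bot_smul] at this
      haveI : Subsingleton P :=
        ⟨fun a b => by
          have ha := (Submodule.mem_bot A).mp (hbot (Submodule.mem_top (x := a)))
          have hb := (Submodule.mem_bot A).mp (hbot (Submodule.mem_top (x := b)))
          rw [ha, hb]⟩
      exact hPne (ModuleCat.isZero_of_subsingleton P)
    · push_neg at hall
      obtain ⟨p, i, hpi⟩ := hall
      refine ⟨ModuleCat.ofHom ((Ideal.jacobson (⊥ : Ideal A)).mkQ ∘ₗ Finsupp.lapply i ∘ₗ s), ?_⟩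
      intro h0
      apply hpi
      have h1 : ((Ideal.jacobson (⊥ : Ideal A)).mkQ ∘ₗ Finsupp.lapply i ∘ₗ s) p = 0 := by
        rw [show ((Ideal.jacobson (⊥ : Ideal A)).mkQ ∘ₗ Finsupp.lapply i ∘ₗ s) =
          (0 : P →ₗ[A] A ⧸ Ideal.jacobson (⊥ : Ideal A)) from by simpa only [ModuleCat.hom_ofHom, ModuleCat.hom_zero] using congrArg ModuleCat.Hom.hom h0]
        rfl
      simp only [LinearMap.comp_apply, Finsupp.lapply_apply, Submodule.mkQ_apply] at h1
      exact (Submodule.Quotient.mk_eq_zero _).mp h1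
  have hF : FaithfulMod Mq := h Mq hfin hsin
  have hJbot : Ideal.jacobson (⊥ : Ideal A) = ⊥ := by
    rw [eq_bot_iff]
    intro a ha
    rw [Submodule.mem_bot]
    refine hF a fun m => ?_
    obtain ⟨b, rfl⟩ := Submodule.mkQ_surjective _ m
    rw [Submodule.mkQ_apply, ← Submodule.Quotient.mk_smul]
    exact (Submodule.Quotient.mk_eq_zero _).mpr (by simpa [smul_eq_mul] using hmul ha)
  haveI : IsSemisimpleRing A := isSemisimpleRing_of_jacobson_bot' hJbot
  intro M N m hm
  obtain ⟨j, rfl⟩ : ∃ j, m = j + 1 := ⟨m - 1, by omega⟩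
  haveI : Projective M := (IsProjective.iff_projective M).mp (moduleProjective_of_semisimple M)
  exact subsingleton_of_isZero' (isZero_Ext_succ_of_projective M N j)


end
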